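/- Consider the storage scheduling LP with round-trip efficiency η < 1 and all prices nonnegative (C_t ≥ 0 for all t). Then there exists an optimal solution of the LP with no simultaneous charge and discharge: any optimal solution can only exhibit simultaneous charge and discharge in time periods t with C_t = 0, and in such periods the charge and discharge quantities can be replaced (preserving the state trajectory) by a pure net charge or pure net discharge without changing the objective value or violating feasibility. -/

import Mathlib

open Finset

def feasible (T : ℕ) (Δt ρ ηC ηD Slb Sub Sinit PC PD : ℝ)
    (s pC pD : ℕ → ℝ) : Prop :=
  s 0 = Sinit ∧
  (∀ t ∈ Icc 1 T, s t = ρ * s (t - 1) + Δt * (ηC * pC t - (1 / ηD) * pD t)) ∧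
  (∀ t ∈ Icc 1 T, Slb ≤ s t ∧ s t ≤ Sub) ∧
  (∀ t ∈ Icc 1 T, 0 ≤ pC t ∧ pC t ≤ PC) ∧
  (∀ t ∈ Icc 1 T, 0 ≤ pD t ∧ pD t ≤ PD)

def objective (T : ℕ) (Δt : ℝ) (C : ℕ → ℝ) (pC pD : ℕ → ℝ) : ℝ :=
  ∑ t ∈ Icc 1 T, Δt * C t * (pD t - pC t)

def optimal (T : ℕ) (Δt ρ ηC ηD Slb Sub Sinit PC PD : ℝ) (C : ℕ → ℝ)
    (s pC pD : ℕ → ℝ) : Prop :=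
  feasible T Δt ρ ηC ηD Slb Sub Sinit PC PD s pC pD ∧
  ∀ s' pC' pD', feasible T Δt ρ ηC ηD Slb Sub Sinit PC PD s' pC' pD' →
    objective T Δt C pC' pD' ≤ objective T Δt C pC pD

theorem stmt2 (T : ℕ) (Δt ρ ηC ηD Slb Sub Sinit PC PD : ℝ) (C : ℕ → ℝ)
    (hΔt : 0 < Δt) (hρ0 : 0 < ρ) (hρ1 : ρ ≤ 1)
    (hηC0 : 0 < ηC) (hηC1 : ηC ≤ 1) (hηD0 : 0 < ηD) (hηD1 : ηD ≤ 1)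
    (hη : ηC * ηD < 1)
    (hS0 : 0 ≤ Slb) (hS : Slb < Sub) (hPC : 0 < PC) (hPD : 0 < PD)
    (hC : ∀ t ∈ Icc 1 T, 0 ≤ C t)
    (s pC pD : ℕ → ℝ)
    (hopt : optimal T Δt ρ ηC ηD Slb Sub Sinit PC PD C s pC pD) :
    (∀ t ∈ Icc 1 T, 0 < pC t → 0 < pD t → C t = 0) ∧
    ∃ pC' pD' : ℕ → ℝ,
      optimal T Δt ρ ηC ηD Slb Sub Sinit PC PD C s pC' pD' ∧
      (∀ t ∈ Icc 1 T, pC' t * pD' t = 0) ∧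
      (∀ t ∈ Icc 1 T, C t ≠ 0 → pC' t = pC t ∧ pD' t = pD t) ∧
      (∀ t ∈ Icc 1 T, C t = 0 →
        (0 ≤ s t - ρ * s (t - 1) →
          pC' t = (s t - ρ * s (t - 1)) / (Δt * ηC) ∧ pD' t = 0) ∧
        (s t - ρ * s (t - 1) < 0 →
          pC' t = 0 ∧ pD' t = -(ηD * (s t - ρ * s (t - 1))) / Δt)) := by
  classical
  obtain ⟨hfeas, hopt2⟩ := hopt
  obtain ⟨hs0, hdyn, hsb, hbC, hbD⟩ := hfeas
  have hηCD : (0:ℝ) < ηC * ηD := mul_pos hηC0 hηD0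
  -- Part 1
  have part1 : ∀ t ∈ Icc 1 T, 0 < pC t → 0 < pD t → C t = 0 := by
    intro t ht hpCt hpDt
    by_contra hCt
    have hCpos : 0 < C t := lt_of_le_of_ne (hC t ht) (Ne.symm hCt)
    set ε := min (pC t) (pD t / (ηC * ηD)) with hε
    have hεpos : 0 < ε := lt_min hpCt (div_pos hpDt hηCD)
    have hε1 : ε ≤ pC t := min_le_left _ _
    have hε2 : ηC * ηD * ε ≤ pD t := by
      have := min_le_right (pC t) (pD t / (ηC * ηD))
      calc ηC * ηD * ε ≤ ηC * ηD * (pD t / (ηC * ηD)) := by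
            exact mul_le_mul_of_nonneg_left this (le_of_lt hηCD)
        _ = pD t := by field_simp
    set pC2 : ℕ → ℝ := fun u => if u = t then pC t - ε else pC u with hpC2
    set pD2 : ℕ → ℝ := fun u => if u = t then pD t - ηC * ηD * ε else pD u with hpD2
    have hfe2 : feasible T Δt ρ ηC ηD Slb Sub Sinit PC PD s pC2 pD2 := by
      refine ⟨hs0, ?_, hsb, ?_, ?_⟩
      · intro u hu
        by_cases h : u = t
        · subst h
          have := hdyn u hu
          simp only [hpC2, hpD2, if_pos rfl]
          rw [this]
          have : (1/ηD) * (ηC * ηD * ε) = ηC * ε := by field_simp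
          ring_nf
          ring_nf at this ⊢
          field_simp
          ring
        · simp only [hpC2, hpD2, if_neg h]
          exact hdyn u hu
      · intro u hu
        by_cases h : u = t
        · subst h
          simp only [hpC2, if_pos rfl]
          constructor
          · linarith
          · have := (hbC u hu).2; linarith [hεpos.le]
        · simp only [hpC2, if_neg h]; exact hbC u hu
      · intro u hu
        by_cases h : u = t
        · subst h
          simp only [hpD2, if_pos rfl]
          constructor
          · linarith
          · have := (hbD u hu).2
            have : 0 ≤ ηC * ηD * ε := by positivity
            linarith [(hbD u hu).2]
        · simp only [hpD2, if_neg h]; exact hbD u hu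
    have hle := hopt2 s pC2 pD2 hfe2
    have hdiff : objective T Δt C pC2 pD2 - objective T Δt C pC pD
        = Δt * C t * (ε - ηC * ηD * ε) := by
      unfold objective
      rw [← Finset.sum_sub_distrib]
      rw [Finset.sum_eq_single t]
      · simp only [hpC2, hpD2, if_pos rfl]; ring
      · intro u hu hne
        simp only [hpC2, hpD2, if_neg hne]; ring
      · intro hnt; exact absurd ht hnt
    have hpos : 0 < Δt * C t * (ε - ηC * ηD * ε) := by
      have h1 : 0 < ε - ηC * ηD * ε := by nlinarith
      positivity
    linarith
  refine ⟨part1, ?_⟩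
  -- Part 2
  set pC' : ℕ → ℝ := fun u =>
    if u ∈ Icc 1 T ∧ C u = 0 then
      (if 0 ≤ s u - ρ * s (u - 1) then (s u - ρ * s (u - 1)) / (Δt * ηC) else 0)
    else pC u with hpC'
  set pD' : ℕ → ℝ := fun u =>
    if u ∈ Icc 1 T ∧ C u = 0 then
      (if 0 ≤ s u - ρ * s (u - 1) then 0 else -(ηD * (s u - ρ * s (u - 1))) / Δt)
    else pD u with hpD'
  have hΔηC : Δt * ηC ≠ 0 := by positivity
  have hfe' : feasible T Δt ρ ηC ηD Slb Sub Sinit PC PD s pC' pD' := by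
    refine ⟨hs0, ?_, hsb, ?_, ?_⟩
    · intro u hu
      by_cases h : u ∈ Icc 1 T ∧ C u = 0
      · simp only [hpC', hpD', if_pos h]
        by_cases hb : 0 ≤ s u - ρ * s (u - 1)
        · simp only [if_pos hb]
          field_simp
          ring
        · simp only [if_neg hb]
          field_simp
          ring
      · simp only [hpC', hpD', if_neg h]
        exact hdyn u hu
    · intro u hu
      by_cases h : u ∈ Icc 1 T ∧ C u = 0
      · simp only [hpC', if_pos h]
        by_cases hb : 0 ≤ s u - ρ * s (u - 1)
        · simp only [if_pos hb]
          constructor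
          · positivity
          · have hdu := hdyn u hu
            have hβ : s u - ρ * s (u - 1) = Δt * (ηC * pC u - (1/ηD) * pD u) := by
              linarith
            have hpDnn := (hbD u hu).1
            have h1 : s u - ρ * s (u - 1) ≤ Δt * ηC * pC u := by
              rw [hβ]
              have : 0 ≤ (1/ηD) * pD u := by positivity
              nlinarith
            have h2 : (s u - ρ * s (u - 1)) / (Δt * ηC) ≤ pC u := by
              rw [div_le_iff₀ (by positivity)]
              linarith [h1]
            exact h2.trans (hbC u hu).2
        · simp only [if_neg hb]
          exact ⟨le_refl _, hPC.le⟩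
      · simp only [hpC', if_neg h]
        exact hbC u hu
    · intro u hu
      by_cases h : u ∈ Icc 1 T ∧ C u = 0
      · simp only [hpD', if_pos h]
        by_cases hb : 0 ≤ s u - ρ * s (u - 1)
        · simp only [if_pos hb]
          exact ⟨le_refl _, hPD.le⟩
        · simp only [if_neg hb]
          push_neg at hb
          constructor
          · have : 0 < -(ηD * (s u - ρ * s (u - 1))) := by nlinarith
            positivity
          · have hdu := hdyn u hu
            have hβ : s u - ρ * s (u - 1) = Δt * (ηC * pC u - (1/ηD) * pD u) := by
              linarith
            have hval : -(ηD * (s u - ρ * s (u - 1))) / Δt = pD u - ηD * ηC * pC u := by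
              rw [hβ]; field_simp; ring
            rw [hval]
            have : 0 ≤ ηD * ηC * pC u := by
              have := (hbC u hu).1; positivity
            linarith [(hbD u hu).2]
      · simp only [hpD', if_neg h]
        exact hbD u hu
  have hobj : objective T Δt C pC' pD' = objective T Δt C pC pD := by
    unfold objective
    apply Finset.sum_congr rfl
    intro u hu
    by_cases h : u ∈ Icc 1 T ∧ C u = 0
    · rw [h.2]; ring
    · simp only [hpC', hpD', if_neg h]
  refine ⟨pC', pD', ⟨hfe', ?_⟩, ?_, ?_, ?_⟩
  · intro s2 pC2 pD2 hfe2
    rw [hobj]; exact hopt2 s2 pC2 pD2 hfe2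
  · intro t ht
    by_cases h : t ∈ Icc 1 T ∧ C t = 0
    · simp only [hpC', hpD', if_pos h]
      by_cases hb : 0 ≤ s t - ρ * s (t - 1)
      · simp only [if_pos hb, mul_zero]
      · simp only [if_neg hb, zero_mul]
    · simp only [hpC', hpD', if_neg h]
      have hCt : C t ≠ 0 := fun hc => h ⟨ht, hc⟩
      rcases (hbC t ht).1.lt_or_eq with h1 | h1
      · rcases (hbD t ht).1.lt_or_eq with h2 | h2
        · exact absurd (part1 t ht h1 h2) hCt
        · rw [← h2, mul_zero]
      · rw [← h1, zero_mul]
  · intro t ht hCt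
    have h : ¬(t ∈ Icc 1 T ∧ C t = 0) := fun hc => hCt hc.2
    simp only [hpC', hpD', if_neg h]
    constructor <;> trivial
  · intro t ht hCt
    have h : t ∈ Icc 1 T ∧ C t = 0 := ⟨ht, hCt⟩
    constructor
    · intro hb
      simp only [hpC', hpD', if_pos h, if_pos hb]
      constructor <;> trivial
    · intro hb
      have hb' : ¬ (0 ≤ s t - ρ * s (t - 1)) := not_le.mpr hb
      simp only [hpC', hpD', if_pos h, if_neg hb']
      constructor <;> trivial
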